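/- If G is a finite connected simple graph with radius at least 3, then GC(G) = C(G), where C(G) is the coalition number of G. -/
import Mathlib


open SimpleGraph Finset

variable {V : Type*} [Fintype V] [DecidableEq V]

/-- `S` is a dominating set of the graph `G`. -/
def IsDomSet (G : SimpleGraph V) (S : Finset V) : Prop :=
  ∀ v : V, v ∈ S ∨ ∃ u ∈ S, G.Adj u v

/-- `S` is a global dominating set of `G`: it dominates both `G` and its complement. -/
def IsGlobalDomSet (G : SimpleGraph V) (S : Finset V) : Prop :=
  IsDomSet G S ∧ IsDomSet Gᶜ S

/-- Disjoint sets `A` and `B` form a global coalition in `G`. -/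
def IsGlobalCoalition (G : SimpleGraph V) (A B : Finset V) : Prop :=
  Disjoint A B ∧ ¬ IsGlobalDomSet G A ∧ ¬ IsGlobalDomSet G B ∧ IsGlobalDomSet G (A ∪ B)

/-- `π` is a global coalition partition (gc-partition) of `G`. -/
def IsGCPartition (G : SimpleGraph V) (π : Finpartition (Finset.univ : Finset V)) : Prop :=
  ∀ A ∈ π.parts, ¬ IsGlobalDomSet G A ∧ ∃ B ∈ π.parts, B ≠ A ∧ IsGlobalCoalition G A B

/-- The global coalition number `GC(G)`: the maximum number of parts in a gc-partition of `G`. -/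
noncomputable def globalCoalitionNumber (G : SimpleGraph V) : ℕ :=
  sSup {n | ∃ π : Finpartition (Finset.univ : Finset V), IsGCPartition G π ∧ π.parts.card = n}

/-- Disjoint sets `A` and `B` form a coalition in `G`. -/
def IsCoalition (G : SimpleGraph V) (A B : Finset V) : Prop :=
  Disjoint A B ∧ ¬ IsDomSet G A ∧ ¬ IsDomSet G B ∧ IsDomSet G (A ∪ B)

/-- `π` is a coalition partition of `G`. -/
def IsCoalitionPartition (G : SimpleGraph V) (π : Finpartition (Finset.univ : Finset V)) : Prop :=
  ∀ A ∈ π.parts, (∃ v : V, A = {v} ∧ IsDomSet G A) ∨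
    (¬ IsDomSet G A ∧ ∃ B ∈ π.parts, B ≠ A ∧ IsCoalition G A B)

/-- The coalition number `C(G)`: the maximum number of parts in a coalition partition of `G`. -/
noncomputable def coalitionNumber (G : SimpleGraph V) : ℕ :=
  sSup {n | ∃ π : Finpartition (Finset.univ : Finset V), IsCoalitionPartition G π ∧ π.parts.card = n}

/-- The eccentricity of a vertex: the maximum distance from `v` to any vertex. -/
noncomputable def eccentricity (G : SimpleGraph V) (v : V) : ℕ :=
  Finset.univ.sup fun u => G.dist v u

/-- The radius of a graph: the minimum eccentricity over all vertices. -/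
noncomputable def graphRadius (G : SimpleGraph V) : ℕ :=
  sInf (Set.range (eccentricity G))

theorem gc_eq_c_of_radius_ge_three (G : SimpleGraph V) (hc : G.Connected)
    (hr : 3 ≤ graphRadius G) :
    globalCoalitionNumber G = coalitionNumber G := by
  have hecc : ∀ v : V, 3 ≤ eccentricity G v := fun v =>
    le_trans hr (Nat.sInf_le ⟨v, rfl⟩)
  -- no dominating set is contained in the open neighborhood of a vertex
  have key : ∀ (S : Finset V) (v : V), IsDomSet G S → (∀ u ∈ S, G.Adj u v) → False := by
    intro S v hS hsub
    have h2 : eccentricity G v ≤ 2 := by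
      apply Finset.sup_le
      intro w _
      have hone : ∀ u ∈ S, G.dist v u ≤ 1 := by
        intro u hu
        have : G.dist v u = 1 := (SimpleGraph.dist_eq_one_iff_adj).2 (hsub u hu).symm
        omega
      rcases hS w with hw | ⟨u, hu, huw⟩
      · have := hone w hw; omega
      · have h1 : G.dist v u ≤ 1 := hone u hu
        have h2 : G.dist u w = 1 := (SimpleGraph.dist_eq_one_iff_adj).2 huw
        have := hc.dist_triangle (u := v) (v := u) (w := w)
        omega
    have := hecc v
    omega
  -- every dominating set is a global dominating set
  have hglob : ∀ S : Finset V, IsGlobalDomSet G S ↔ IsDomSet G S := by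
    intro S
    constructor
    · exact fun h => h.1
    · intro h
      refine ⟨h, ?_⟩
      intro v
      by_contra hv
      push_neg at hv
      obtain ⟨hvS, hv2⟩ := hv
      refine key S v h ?_
      intro u hu
      have := hv2 u hu
      rw [SimpleGraph.compl_adj] at this
      push_neg at this
      by_contra hadj
      have huv : u = v := by
        by_contra h'
        exact hadj (this h')
      exact hvS (huv ▸ hu)
  -- no singleton is a dominating set
  have hsingle : ∀ v : V, ¬ IsDomSet G ({v} : Finset V) := by
    intro v hv
    have h2 : eccentricity G v ≤ 1 := by
      apply Finset.sup_le
      intro w _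
      rcases hv w with hw | ⟨u, hu, huw⟩
      · simp only [Finset.mem_singleton] at hw
        subst hw; simp [SimpleGraph.dist_self]
      · simp only [Finset.mem_singleton] at hu
        have : G.dist v w = 1 := (SimpleGraph.dist_eq_one_iff_adj).2 (hu ▸ huw)
        omega
    have := hecc v
    omega
  -- coalitions coincide
  have hco : ∀ A B : Finset V, IsGlobalCoalition G A B ↔ IsCoalition G A B := by
    intro A B
    unfold IsGlobalCoalition IsCoalition
    rw [hglob, hglob, hglob]
  have hpart : ∀ π : Finpartition (Finset.univ : Finset V),
      IsGCPartition G π ↔ IsCoalitionPartition G π := by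
    intro π
    constructor
    · intro h A hA
      obtain ⟨h1, B, hB, hBA, hc'⟩ := h A hA
      exact Or.inr ⟨fun hd => h1 ((hglob A).2 hd), B, hB, hBA, (hco A B).1 hc'⟩
    · intro h A hA
      rcases h A hA with ⟨v, hAv, hd⟩ | ⟨hnd, B, hB, hBA, hc'⟩
      · exact absurd (hAv ▸ hd) (hsingle v)
      · exact ⟨fun hg => hnd ((hglob A).1 hg), B, hB, hBA, (hco A B).2 hc'⟩
  unfold globalCoalitionNumber coalitionNumber
  congr 1
  ext n
  simp only [Set.mem_setOf_eq]
  constructor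
  · rintro ⟨π, hπ, rfl⟩; exact ⟨π, (hpart π).1 hπ, rfl⟩
  · rintro ⟨π, hπ, rfl⟩; exact ⟨π, (hpart π).2 hπ, rfl⟩
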